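/- Let G be a group and g, h ∈ G such that C_G(g) = C_G(gⁿ) for all nonzero integers n and C_G(h) = C_G(hᵐ) for all nonzero integers m. If the cyclic subgroups ⟨g⟩ and ⟨h⟩ have finite-index subgroups that commute elementwise, then ⟨g⟩ and ⟨h⟩ commute elementwise. -/

import Mathlib

/-- If the centralizer of `g` equals the centralizer of every nonzero power of
`g`, and similarly for `h`, and the cyclic subgroups `⟨g⟩` and `⟨h⟩` have
finite-index subgroups that commute elementwise, then `⟨g⟩` and `⟨h⟩` commute
elementwise. -/
theorem stmt_18 {G : Type*} [Group G] (g h : G)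
    (hg : ∀ n : ℤ, n ≠ 0 → Subgroup.centralizer {g} = Subgroup.centralizer {g ^ n})
    (hh : ∀ m : ℤ, m ≠ 0 → Subgroup.centralizer {h} = Subgroup.centralizer {h ^ m})
    (hfin : ∃ H K : Subgroup G, H ≤ Subgroup.zpowers g ∧ K ≤ Subgroup.zpowers h ∧
      (H.subgroupOf (Subgroup.zpowers g)).FiniteIndex ∧
      (K.subgroupOf (Subgroup.zpowers h)).FiniteIndex ∧
      ∀ x ∈ H, ∀ y ∈ K, Commute x y) :
    ∀ x ∈ Subgroup.zpowers g, ∀ y ∈ Subgroup.zpowers h, Commute x y := by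
  obtain ⟨H, K, hHle, hKle, hHfi, hKfi, hcomm⟩ := hfin
  -- find nonzero powers of g, h in H, K
  obtain ⟨n, hn0, -, hgn⟩ := Subgroup.exists_pow_mem_of_relIndex_ne_zero
    (K := Subgroup.zpowers g) hHfi.index_ne_zero (Subgroup.mem_zpowers g)
  obtain ⟨m, hm0, -, hhm⟩ := Subgroup.exists_pow_mem_of_relIndex_ne_zero
    (K := Subgroup.zpowers h) hKfi.index_ne_zero (Subgroup.mem_zpowers h)
  have hc : Commute (g ^ n) (h ^ m) := hcomm _ hgn.1 _ hhm.1
  -- h^m centralizes g^n, hence g, hence g centralizes h^m, hence h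
  have h1 : h ^ m ∈ Subgroup.centralizer {g ^ (n : ℤ)} := by
    rw [Subgroup.mem_centralizer_singleton_iff, zpow_natCast]
    exact hc.symm.eq
  rw [← hg n (by exact_mod_cast hn0.ne')] at h1
  have h2 : g ∈ Subgroup.centralizer {h ^ (m : ℤ)} := by
    rw [Subgroup.mem_centralizer_singleton_iff, zpow_natCast]
    exact (Subgroup.mem_centralizer_singleton_iff.mp h1).symm
  rw [← hh m (by exact_mod_cast hm0.ne')] at h2
  have hgh : Commute g h := Subgroup.mem_centralizer_singleton_iff.mp h2
  rintro x ⟨a, rfl⟩ y ⟨b, rfl⟩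
  exact (hgh.zpow_zpow a b)
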